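/- arXiv:2407.09764 — 3 statements merged into one kernel-verified Lean document; each statement's English description precedes it below -/
import Mathlib

section
/- For every integer m ≥ 1 and every field F, the space of derivations of the Heisenberg Lie algebra h_m has dimension 2m² + 3m + 1 = (2m+1)(m+1) over F. -/
namespace HeisAux

variable (F : Type*) [Field F] (m : ℕ)

/-- the symplectic pairing partner index -/
def phi (m : ℕ) (i : Fin (2*m)) : Fin (2*m) :=
  ⟨if (i:ℕ) < m then (i:ℕ) + m else (i:ℕ) - m, by have := i.isLt; split <;> omega⟩

/-- sign -/
def sg (i : Fin (2*m)) : F := if (i:ℕ) < m then 1 else -1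

/-- "upper half" of the symplectic form -/
def Nm (i j : Fin (2*m)) : F := if (j:ℕ) = (i:ℕ) + m ∧ (i:ℕ) < m then 1 else 0

/-- the symplectic form -/
def om (i j : Fin (2*m)) : F := Nm F m i j - Nm F m j i

variable {m}

@[simp] lemma phi_val (i : Fin (2*m)) :
    ((phi m i : Fin (2*m)) : ℕ) = if (i:ℕ) < m then (i:ℕ) + m else (i:ℕ) - m := rfl

@[simp] lemma phi_phi (i : Fin (2*m)) : phi m (phi m i) = i := by
  have := i.isLt
  ext
  simp only [phi_val]
  split_ifs <;> omega

lemma sg_phi (i : Fin (2*m)) : sg F m (phi m i) = - sg F m i := by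
  have := i.isLt
  simp only [sg, phi_val]
  split_ifs <;> first | ring1 | (exfalso; omega)

@[simp] lemma sg_mul_self (i : Fin (2*m)) : sg F m i * sg F m i = 1 := by
  simp only [sg]; split <;> ring

lemma sg_ne_zero (i : Fin (2*m)) : sg F m i ≠ 0 := by
  simp only [sg]; split <;> simp

lemma om_eq_left (i k : Fin (2*m)) :
    om F m i k = if k = phi m i then sg F m i else 0 := by
  have hi := i.isLt; have hk := k.isLt
  simp only [om, Nm, sg, Fin.ext_iff, phi_val]
  split_ifs <;> first | ring1 | (exfalso; omega)

lemma om_eq_right (k j : Fin (2*m)) :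
    om F m k j = if k = phi m j then sg F m (phi m j) else 0 := by
  have hj := j.isLt; have hk := k.isLt
  simp only [om, Nm, sg, Fin.ext_iff, phi_val]
  split_ifs <;> first | ring1 | (exfalso; omega)

lemma Nm_sub (i j : Fin (2*m)) : Nm F m i j - Nm F m j i = om F m i j := rfl



section Bracket

variable {F : Type*} [Field F] {m : ℕ}
variable {L : Type*} [LieRing L] [LieAlgebra F L]
variable (b : Module.Basis (Fin (2*m+1)) F L)

lemma sum_lie' {ι : Type*} (s : Finset ι) (f : ι → L) (y : L) :
    ⁅∑ i ∈ s, f i, y⁆ = ∑ i ∈ s, ⁅f i, y⁆ := by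
  classical
  induction s using Finset.induction with
  | empty => simp
  | insert _ _ h ih => rw [Finset.sum_insert h, Finset.sum_insert h, add_lie, ih]

lemma lie_sum' {ι : Type*} (s : Finset ι) (x : L) (f : ι → L) :
    ⁅x, ∑ i ∈ s, f i⁆ = ∑ i ∈ s, ⁅x, f i⁆ := by
  classical
  induction s using Finset.induction with
  | empty => simp
  | insert _ _ h ih => rw [Finset.sum_insert h, Finset.sum_insert h, lie_add, ih]



lemma br_cc
    (hb : ∀ i j : Fin (2*m+1), ⁅b i, b j⁆ =
      if (j : ℕ) = (i : ℕ) + m ∧ (i : ℕ) < m then b (Fin.last (2*m))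
      else if (i : ℕ) = (j : ℕ) + m ∧ (j : ℕ) < m then - b (Fin.last (2*m))
      else 0)
    (i j : Fin (2*m)) :
    ⁅b i.castSucc, b j.castSucc⁆ = om F m i j • b (Fin.last (2*m)) := by
  rw [hb]
  simp only [om, Nm, Fin.coe_castSucc]
  split_ifs <;> first | (exfalso; omega) | simp

lemma br_last_right_basis
    (hb : ∀ i j : Fin (2*m+1), ⁅b i, b j⁆ =
      if (j : ℕ) = (i : ℕ) + m ∧ (i : ℕ) < m then b (Fin.last (2*m))
      else if (i : ℕ) = (j : ℕ) + m ∧ (j : ℕ) < m then - b (Fin.last (2*m))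
      else 0)
    (k : Fin (2*m+1)) :
    ⁅b k, b (Fin.last (2*m))⁆ = 0 := by
  have := k.isLt
  rw [hb]
  simp only [Fin.val_last]
  split_ifs <;> first | (exfalso; omega) | rfl

lemma br_last_left_basis
    (hb : ∀ i j : Fin (2*m+1), ⁅b i, b j⁆ =
      if (j : ℕ) = (i : ℕ) + m ∧ (i : ℕ) < m then b (Fin.last (2*m))
      else if (i : ℕ) = (j : ℕ) + m ∧ (j : ℕ) < m then - b (Fin.last (2*m))
      else 0)
    (k : Fin (2*m+1)) :
    ⁅b (Fin.last (2*m)), b k⁆ = 0 := by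
  have := k.isLt
  rw [hb]
  simp only [Fin.val_last]
  split_ifs <;> first | (exfalso; omega) | rfl

lemma br_last_right_all
    (hb : ∀ i j : Fin (2*m+1), ⁅b i, b j⁆ =
      if (j : ℕ) = (i : ℕ) + m ∧ (i : ℕ) < m then b (Fin.last (2*m))
      else if (i : ℕ) = (j : ℕ) + m ∧ (j : ℕ) < m then - b (Fin.last (2*m))
      else 0)
    (x : L) :
    ⁅x, b (Fin.last (2*m))⁆ = 0 := by
  conv_lhs => rw [← b.sum_repr x]
  rw [sum_lie']
  simp [smul_lie, br_last_right_basis b hb]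

lemma br_last_left_all
    (hb : ∀ i j : Fin (2*m+1), ⁅b i, b j⁆ =
      if (j : ℕ) = (i : ℕ) + m ∧ (i : ℕ) < m then b (Fin.last (2*m))
      else if (i : ℕ) = (j : ℕ) + m ∧ (j : ℕ) < m then - b (Fin.last (2*m))
      else 0)
    (x : L) :
    ⁅b (Fin.last (2*m)), x⁆ = 0 := by
  conv_lhs => rw [← b.sum_repr x]
  rw [lie_sum']
  simp [lie_smul, br_last_left_basis b hb]

lemma lie_right_collapse
    (hb : ∀ i j : Fin (2*m+1), ⁅b i, b j⁆ =
      if (j : ℕ) = (i : ℕ) + m ∧ (i : ℕ) < m then b (Fin.last (2*m))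
      else if (i : ℕ) = (j : ℕ) + m ∧ (j : ℕ) < m then - b (Fin.last (2*m))
      else 0)
    (x : L) (j : Fin (2*m)) :
    ⁅x, b j.castSucc⁆
      = (sg F m (phi m j) * b.repr x ((phi m j).castSucc)) • b (Fin.last (2*m)) := by
  conv_lhs => rw [← b.sum_repr x]
  rw [sum_lie', Fin.sum_univ_castSucc]
  simp only [smul_lie, br_last_left_basis b hb, smul_zero, add_zero,
    br_cc b hb, om_eq_right]
  simp only [ite_smul, zero_smul, smul_ite, smul_zero]
  rw [Finset.sum_ite_eq' Finset.univ (phi m j)]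
  simp [smul_smul, mul_comm]

lemma lie_left_collapse
    (hb : ∀ i j : Fin (2*m+1), ⁅b i, b j⁆ =
      if (j : ℕ) = (i : ℕ) + m ∧ (i : ℕ) < m then b (Fin.last (2*m))
      else if (i : ℕ) = (j : ℕ) + m ∧ (j : ℕ) < m then - b (Fin.last (2*m))
      else 0)
    (i : Fin (2*m)) (x : L) :
    ⁅b i.castSucc, x⁆
      = (sg F m i * b.repr x ((phi m i).castSucc)) • b (Fin.last (2*m)) := by
  conv_lhs => rw [← b.sum_repr x]
  rw [lie_sum', Fin.sum_univ_castSucc]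
  simp only [lie_smul, br_last_right_basis b hb, smul_zero, add_zero,
    br_cc b hb, om_eq_left]
  simp only [ite_smul, zero_smul, smul_ite, smul_zero]
  rw [Finset.sum_ite_eq' Finset.univ (phi m i)]
  simp [smul_smul, mul_comm]

end Bracket



section Der

variable {F : Type*} [Field F] {m : ℕ}
variable {L : Type*} [LieRing L] [LieAlgebra F L]
variable (b : Module.Basis (Fin (2*m+1)) F L)

lemma repr_D_last
    (hb : ∀ i j : Fin (2*m+1), ⁅b i, b j⁆ =
      if (j : ℕ) = (i : ℕ) + m ∧ (i : ℕ) < m then b (Fin.last (2*m))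
      else if (i : ℕ) = (j : ℕ) + m ∧ (j : ℕ) < m then - b (Fin.last (2*m))
      else 0)
    (D : LieDerivation F L L) (k : Fin (2*m)) :
    b.repr (D (b (Fin.last (2*m)))) k.castSucc = 0 := by
  have h := D.apply_lie_eq_add (b (phi m k).castSucc) (b (Fin.last (2*m)))
  rw [br_last_right_basis b hb, map_zero, br_last_right_all b hb, add_zero,
      lie_left_collapse b hb, phi_phi] at h
  have h2 := h.symm
  rw [smul_eq_zero] at h2
  rcases h2 with h2 | h2
  · rcases mul_eq_zero.mp h2 with h3 | h3
    · exact absurd h3 (sg_ne_zero F _)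
    · exact h3
  · exact absurd h2 (b.ne_zero _)

lemma D_last_eq
    (hb : ∀ i j : Fin (2*m+1), ⁅b i, b j⁆ =
      if (j : ℕ) = (i : ℕ) + m ∧ (i : ℕ) < m then b (Fin.last (2*m))
      else if (i : ℕ) = (j : ℕ) + m ∧ (j : ℕ) < m then - b (Fin.last (2*m))
      else 0)
    (D : LieDerivation F L L) :
    D (b (Fin.last (2*m)))
      = b.repr (D (b (Fin.last (2*m)))) (Fin.last (2*m)) • b (Fin.last (2*m)) := by
  conv_lhs => rw [← b.sum_repr (D (b (Fin.last (2*m))))]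
  rw [Fin.sum_univ_castSucc]
  simp [repr_D_last b hb D]

lemma constraint
    (hb : ∀ i j : Fin (2*m+1), ⁅b i, b j⁆ =
      if (j : ℕ) = (i : ℕ) + m ∧ (i : ℕ) < m then b (Fin.last (2*m))
      else if (i : ℕ) = (j : ℕ) + m ∧ (j : ℕ) < m then - b (Fin.last (2*m))
      else 0)
    (D : LieDerivation F L L) (i j : Fin (2*m)) :
    om F m i j * b.repr (D (b (Fin.last (2*m)))) (Fin.last (2*m))
      = sg F m i * b.repr (D (b j.castSucc)) ((phi m i).castSucc)
        + sg F m (phi m j) * b.repr (D (b i.castSucc)) ((phi m j).castSucc) := by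
  have h := D.apply_lie_eq_add (b i.castSucc) (b j.castSucc)
  rw [br_cc b hb, map_smul, lie_left_collapse b hb i (D (b j.castSucc)),
      lie_right_collapse b hb (D (b i.castSucc)) j] at h
  have h2 := congrArg (fun v => b.repr v (Fin.last (2*m))) h
  simp only [map_add, map_smul, Finsupp.add_apply, Finsupp.smul_apply,
    Module.Basis.repr_self, Finsupp.single_eq_same, smul_eq_mul, mul_one] at h2
  linear_combination h2

end Der

section Construction

variable {F : Type*} [Field F] {m : ℕ}
variable {L : Type*} [LieRing L] [LieAlgebra F L]
variable (b : Module.Basis (Fin (2*m+1)) F L)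

/-- Parameter space: symmetric part, center column, central eigenvalue. -/
abbrev Params (F : Type*) [Field F] (m : ℕ) :=
  ({q : Fin (2*m) × Fin (2*m) // q.1 ≤ q.2} → F) × (Fin (2*m) → F) × F

variable (p : Params F m)

def Sv (p : Params F m) (i j : Fin (2*m)) : F :=
  p.1 ⟨(min i j, max i j), min_le_max⟩

lemma Sv_symm (i j : Fin (2*m)) : Sv p i j = Sv p j i := by
  unfold Sv
  exact congrArg p.1 (Subtype.ext (by simp [min_comm, max_comm]))

lemma Sv_of_le {i j : Fin (2*m)} (h : i ≤ j) : Sv p i j = p.1 ⟨(i, j), h⟩ := by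
  unfold Sv
  exact congrArg p.1 (Subtype.ext (by simp [min_eq_left h, max_eq_right h]))

def Bm (p : Params F m) (i j : Fin (2*m)) : F := Sv p i j + p.2.2 * Nm F m i j

lemma Bm_sub (i j : Fin (2*m)) : Bm p i j - Bm p j i = p.2.2 * om F m i j := by
  unfold Bm om
  rw [Sv_symm]
  ring

def Am (p : Params F m) (k j : Fin (2*m)) : F := sg F m (phi m k) * Bm p (phi m k) j

lemma sg_mul_Am (k j : Fin (2*m)) : sg F m k * Am p (phi m k) j = Bm p k j := by
  unfold Am
  rw [phi_phi, ← mul_assoc, sg_mul_self, one_mul]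

noncomputable def Dmap (p : Params F m) : L →ₗ[F] L :=
  b.constr F (Fin.lastCases (p.2.2 • b (Fin.last (2*m)))
    (fun j => (∑ k : Fin (2*m), Am p k j • b k.castSucc) + p.2.1 j • b (Fin.last (2*m))))

lemma Dmap_cs (j : Fin (2*m)) :
    Dmap b p (b j.castSucc)
      = (∑ k : Fin (2*m), Am p k j • b k.castSucc) + p.2.1 j • b (Fin.last (2*m)) := by
  unfold Dmap
  rw [Module.Basis.constr_basis]
  simp

lemma Dmap_last :
    Dmap b p (b (Fin.last (2*m))) = p.2.2 • b (Fin.last (2*m)) := by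
  unfold Dmap
  rw [Module.Basis.constr_basis]
  simp

lemma repr_Dmap_cs_cs (j k : Fin (2*m)) :
    b.repr (Dmap b p (b j.castSucc)) k.castSucc = Am p k j := by
  have hne : Fin.last (2*m) ≠ k.castSucc := (Fin.castSucc_lt_last k).ne'
  rw [Dmap_cs]
  simp [Module.Basis.repr_self, Finsupp.single_apply, Fin.castSucc_inj, hne,
    Finset.sum_ite_eq' Finset.univ k]

lemma repr_Dmap_cs_last (j : Fin (2*m)) :
    b.repr (Dmap b p (b j.castSucc)) (Fin.last (2*m)) = p.2.1 j := by
  have hne : ∀ k : Fin (2*m), k.castSucc ≠ Fin.last (2*m) := fun k => (Fin.castSucc_lt_last k).ne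
  rw [Dmap_cs]
  simp [Module.Basis.repr_self, Finsupp.single_apply, hne]

lemma repr_Dmap_last_last :
    b.repr (Dmap b p (b (Fin.last (2*m)))) (Fin.last (2*m)) = p.2.2 := by
  rw [Dmap_last]
  simp

end Construction



section Leibniz

variable {F : Type*} [Field F] {m : ℕ}
variable {L : Type*} [LieRing L] [LieAlgebra F L]
variable (b : Module.Basis (Fin (2*m+1)) F L) (p : Params F m)

lemma sgphi_mul_Am (j i : Fin (2*m)) :
    sg F m (phi m j) * Am p (phi m j) i = - Bm p j i := by
  unfold Am
  rw [phi_phi, sg_phi, neg_mul, ← mul_assoc, sg_mul_self, one_mul]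

lemma Dmap_leibniz_basis
    (hb : ∀ i j : Fin (2*m+1), ⁅b i, b j⁆ =
      if (j : ℕ) = (i : ℕ) + m ∧ (i : ℕ) < m then b (Fin.last (2*m))
      else if (i : ℕ) = (j : ℕ) + m ∧ (j : ℕ) < m then - b (Fin.last (2*m))
      else 0)
    (i j : Fin (2*m+1)) :
    Dmap b p ⁅b i, b j⁆ = ⁅b i, Dmap b p (b j)⁆ + ⁅Dmap b p (b i), b j⁆ := by
  induction i using Fin.lastCases with
  | last =>
    rw [br_last_left_basis b hb, map_zero, br_last_left_all b hb, Dmap_last,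
      smul_lie, br_last_left_basis b hb, smul_zero, add_zero]
  | cast i =>
    induction j using Fin.lastCases with
    | last =>
      rw [br_last_right_basis b hb, map_zero, br_last_right_all b hb, Dmap_last,
        lie_smul, br_last_right_basis b hb, smul_zero, zero_add]
    | cast j =>
      rw [br_cc b hb, map_smul, Dmap_last,
        lie_left_collapse b hb i (Dmap b p (b j.castSucc)),
        lie_right_collapse b hb (Dmap b p (b i.castSucc)) j,
        repr_Dmap_cs_cs, repr_Dmap_cs_cs, sg_mul_Am, sgphi_mul_Am,
        smul_smul, ← add_smul]
      congr 1
      have hs := Bm_sub p i j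
      linear_combination -hs

lemma Dmap_leibniz
    (hb : ∀ i j : Fin (2*m+1), ⁅b i, b j⁆ =
      if (j : ℕ) = (i : ℕ) + m ∧ (i : ℕ) < m then b (Fin.last (2*m))
      else if (i : ℕ) = (j : ℕ) + m ∧ (j : ℕ) < m then - b (Fin.last (2*m))
      else 0)
    (x y : L) :
    Dmap b p ⁅x, y⁆ = ⁅x, Dmap b p y⁆ - ⁅y, Dmap b p x⁆ := by
  set D := Dmap b p with hD
  let Br : L →ₗ[F] L →ₗ[F] L :=
    LinearMap.mk₂ F (fun x y => ⁅x, y⁆) add_lie smul_lie lie_add lie_smul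
  have key : ((LinearMap.llcomp F L L L D).comp Br) = Br.compl₂ D - (Br.compl₂ D).flip := by
    apply b.ext; intro i
    apply b.ext; intro j
    have h := Dmap_leibniz_basis b p hb i j
    simp only [LinearMap.comp_apply, LinearMap.llcomp_apply, LinearMap.sub_apply,
      LinearMap.compl₂_apply, LinearMap.flip_apply, LinearMap.mk₂_apply, Br]
    rw [← hD] at h
    rw [h, sub_eq_add_neg, lie_skew]
  have h2 := LinearMap.congr_fun (LinearMap.congr_fun key x) y
  simpa only [LinearMap.comp_apply, LinearMap.llcomp_apply, LinearMap.sub_apply,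
    LinearMap.compl₂_apply, LinearMap.flip_apply, LinearMap.mk₂_apply, Br] using h2

noncomputable def DerOf
    (hb : ∀ i j : Fin (2*m+1), ⁅b i, b j⁆ =
      if (j : ℕ) = (i : ℕ) + m ∧ (i : ℕ) < m then b (Fin.last (2*m))
      else if (i : ℕ) = (j : ℕ) + m ∧ (j : ℕ) < m then - b (Fin.last (2*m))
      else 0)
    (p : Params F m) : LieDerivation F L L :=
  ⟨Dmap b p, fun x y => Dmap_leibniz b p hb x y⟩

@[simp] lemma DerOf_apply
    (hb : ∀ i j : Fin (2*m+1), ⁅b i, b j⁆ =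
      if (j : ℕ) = (i : ℕ) + m ∧ (i : ℕ) < m then b (Fin.last (2*m))
      else if (i : ℕ) = (j : ℕ) + m ∧ (j : ℕ) < m then - b (Fin.last (2*m))
      else 0)
    (p : Params F m) (x : L) :
    DerOf b hb p x = Dmap b p x := rfl

end Leibniz



section Main

variable {F : Type*} [Field F] {m : ℕ}
variable {L : Type*} [LieRing L] [LieAlgebra F L]
variable (b : Module.Basis (Fin (2*m+1)) F L)

noncomputable def Emap : LieDerivation F L L →ₗ[F] Params F m where
  toFun D :=
    (fun q => sg F m q.1.1 * b.repr (D (b q.1.2.castSucc)) ((phi m q.1.1).castSucc)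
        - b.repr (D (b (Fin.last (2*m)))) (Fin.last (2*m)) * Nm F m q.1.1 q.1.2,
     fun j => b.repr (D (b j.castSucc)) (Fin.last (2*m)),
     b.repr (D (b (Fin.last (2*m)))) (Fin.last (2*m)))
  map_add' D1 D2 := by
    refine Prod.ext ?_ (Prod.ext ?_ ?_)
    · funext q
      simp only [LieDerivation.add_apply, map_add, Finsupp.add_apply, Pi.add_apply,
        Prod.fst_add]
      ring
    · funext j
      simp [LieDerivation.add_apply]
    · simp [LieDerivation.add_apply]
  map_smul' c D := by
    refine Prod.ext ?_ (Prod.ext ?_ ?_)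
    · funext q
      simp only [LieDerivation.smul_apply, map_smul, Finsupp.smul_apply, Pi.smul_apply,
        Prod.smul_fst, smul_eq_mul, RingHom.id_apply]
      ring
    · funext j
      simp [LieDerivation.smul_apply]
    · simp [LieDerivation.smul_apply]

lemma Emap_injective
    (hb : ∀ i j : Fin (2*m+1), ⁅b i, b j⁆ =
      if (j : ℕ) = (i : ℕ) + m ∧ (i : ℕ) < m then b (Fin.last (2*m))
      else if (i : ℕ) = (j : ℕ) + m ∧ (j : ℕ) < m then - b (Fin.last (2*m))
      else 0)
    : Function.Injective (Emap b) := by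
  apply (injective_iff_map_eq_zero (Emap b)).mpr
  intro D hD
  have h1 : ∀ q : {q : Fin (2*m) × Fin (2*m) // q.1 ≤ q.2},
      sg F m q.1.1 * b.repr (D (b q.1.2.castSucc)) ((phi m q.1.1).castSucc)
        - b.repr (D (b (Fin.last (2*m)))) (Fin.last (2*m)) * Nm F m q.1.1 q.1.2 = 0 :=
    fun q => congrFun (congrArg Prod.fst hD) q
  have h2 : ∀ j : Fin (2*m), b.repr (D (b j.castSucc)) (Fin.last (2*m)) = 0 :=
    fun j => congrFun (congrArg (fun t => t.2.1) hD) j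
  have h3 : b.repr (D (b (Fin.last (2*m)))) (Fin.last (2*m)) = 0 :=
    congrArg (fun t => t.2.2) hD
  have claim : ∀ i j : Fin (2*m),
      sg F m i * b.repr (D (b j.castSucc)) ((phi m i).castSucc) = 0 := by
    intro i j
    rcases le_total i j with h | h
    · have := h1 ⟨(i, j), h⟩
      rw [h3] at this
      simpa using this
    · have hc := constraint b hb D i j
      have hji := h1 ⟨(j, i), h⟩
      rw [h3] at hc hji
      have hY : b.repr (D (b i.castSucc)) ((phi m j).castSucc) = 0 := by
        simp only [zero_mul, sub_zero] at hji
        rcases mul_eq_zero.mp hji with h' | h'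
        · exact absurd h' (sg_ne_zero F _)
        · exact h'
      rw [hY, sg_phi] at hc
      linear_combination -hc
  have hA : ∀ k j : Fin (2*m), b.repr (D (b j.castSucc)) k.castSucc = 0 := by
    intro k j
    have := claim (phi m k) j
    rw [phi_phi] at this
    rcases mul_eq_zero.mp this with h' | h'
    · exact absurd h' (sg_ne_zero F _)
    · exact h'
  have hDb : ∀ i : Fin (2*m+1), D (b i) = 0 := by
    intro i
    induction i using Fin.lastCases with
    | last => rw [D_last_eq b hb D, h3, zero_smul]
    | cast j =>
      have hz : b.repr (D (b j.castSucc)) = 0 := by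
        ext k
        induction k using Fin.lastCases with
        | last => simpa using h2 j
        | cast k => simpa using hA k j
      exact (LinearEquiv.map_eq_zero_iff b.repr).mp hz
  ext x
  rw [← b.sum_repr x, map_sum]
  simp [hDb]

lemma Emap_surjective
    (hb : ∀ i j : Fin (2*m+1), ⁅b i, b j⁆ =
      if (j : ℕ) = (i : ℕ) + m ∧ (i : ℕ) < m then b (Fin.last (2*m))
      else if (i : ℕ) = (j : ℕ) + m ∧ (j : ℕ) < m then - b (Fin.last (2*m))
      else 0)
    : Function.Surjective (Emap b) := by
  intro p
  refine ⟨DerOf b hb p, ?_⟩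
  refine Prod.ext ?_ (Prod.ext ?_ ?_)
  · funext q
    obtain ⟨⟨i, j⟩, hq⟩ := q
    show sg F m i * b.repr (Dmap b p (b j.castSucc)) ((phi m i).castSucc)
        - b.repr (Dmap b p (b (Fin.last (2*m)))) (Fin.last (2*m)) * Nm F m i j
        = p.1 ⟨(i, j), hq⟩
    rw [repr_Dmap_cs_cs, repr_Dmap_last_last, sg_mul_Am]
    unfold Bm
    rw [Sv_of_le p hq]
    ring
  · funext j
    exact repr_Dmap_cs_last b p j
  · exact repr_Dmap_last_last b p

lemma card_idx (m : ℕ) :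
    Fintype.card {q : Fin (2*m) × Fin (2*m) // q.1 ≤ q.2} = 2*m^2 + m := by
  rw [← Fintype.card_congr (Sym2.sortEquiv (α := Fin (2*m))), Sym2.card, Fintype.card_fin,
    Nat.choose_two_right]
  have h1 : (2*m+1) - 1 = 2*m := by omega
  rw [h1]
  have h2 : (2*m+1) * (2*m) = (2*m^2+m) * 2 := by ring
  rw [h2, Nat.mul_div_cancel _ (by norm_num)]

lemma finrank_der
    (hb : ∀ i j : Fin (2*m+1), ⁅b i, b j⁆ =
      if (j : ℕ) = (i : ℕ) + m ∧ (i : ℕ) < m then b (Fin.last (2*m))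
      else if (i : ℕ) = (j : ℕ) + m ∧ (j : ℕ) < m then - b (Fin.last (2*m))
      else 0)
    : Module.finrank F (LieDerivation F L L) = 2*m^2 + 3*m + 1 := by
  have e := LinearEquiv.ofBijective (Emap b) ⟨Emap_injective b hb, Emap_surjective b hb⟩
  rw [e.finrank_eq, Module.finrank_prod, Module.finrank_prod, Module.finrank_pi,
    Module.finrank_pi, Module.finrank_self, card_idx, Fintype.card_fin]
  ring

end Main

end HeisAux

/-- For every integer `m ≥ 1` and every field `F`, the space of derivations
of the Heisenberg Lie algebra `h_m` has dimension `2m² + 3m + 1 = (2m+1)(m+1)` over `F`. -/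
theorem heisenberg_derivations_dim
    (F : Type*) [Field F] (m : ℕ) (hm : 1 ≤ m)
    (L : Type*) [LieRing L] [LieAlgebra F L]
    (b : Module.Basis (Fin (2*m+1)) F L)
    (hb : ∀ i j : Fin (2*m+1), ⁅b i, b j⁆ =
      if (j : ℕ) = (i : ℕ) + m ∧ (i : ℕ) < m then b (Fin.last (2*m))
      else if (i : ℕ) = (j : ℕ) + m ∧ (j : ℕ) < m then - b (Fin.last (2*m))
      else 0) :
    Module.finrank F (LieDerivation F L L) = 2*m^2 + 3*m + 1 ∧
    2*m^2 + 3*m + 1 = (2*m+1)*(m+1) := by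
  exact ⟨HeisAux.finrank_der b hb, by ring⟩
end

section
/- Let F be an algebraically closed field of characteristic 2, let m ≥ 1, and let λ = (λ_1, …, λ_{2m+1}) ∈ F^{2m+1} with λ_{2m+1} ≠ 0. Consider the subspace D_λ of derivations ψ of h_m satisfying [g, ψ(g)] = ψ(g^{[2]}) for all g ∈ h_m; this subspace contains all inner derivations. Then the quotient space D_λ / Inn(h_m) (which is the restricted cohomology H¹_*(h_m^λ(2), h_m^λ(2))) has dimension 2m² − m over F. -/
open Finset

section HeisAux

/-- structure constants of the Heisenberg algebra -/
def heisC (F : Type*) [Field F] (m : ℕ) (i j : Fin (2*m+1)) : F :=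
  if (j : ℕ) = (i : ℕ) + m ∧ (i : ℕ) < m then 1
  else if (i : ℕ) = (j : ℕ) + m ∧ (j : ℕ) < m then -1 else 0

/-- the involution pairing `e_i ↔ e_{i+m}` -/
def heisS (m : ℕ) (k : Fin (2*m+1)) : Fin (2*m+1) :=
  if h : (k : ℕ) < m then ⟨(k : ℕ) + m, by omega⟩
  else if h2 : (k : ℕ) < 2*m then ⟨(k : ℕ) - m, by have := k.isLt; omega⟩
  else k

variable {F : Type*} [Field F] {m : ℕ}

lemma heisS_apply_lt {k : Fin (2*m+1)} (h : (k : ℕ) < m) :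
    heisS m k = ⟨(k : ℕ) + m, by omega⟩ := by unfold heisS; rw [dif_pos h]

lemma heisS_apply_ge {k : Fin (2*m+1)} (h1 : ¬ (k : ℕ) < m) (h2 : (k : ℕ) < 2*m) :
    heisS m k = ⟨(k : ℕ) - m, by have := k.isLt; omega⟩ := by
  unfold heisS; rw [dif_neg h1, dif_pos h2]

lemma heisS_apply_last {k : Fin (2*m+1)} (h2 : ¬ (k : ℕ) < 2*m) : heisS m k = k := by
  unfold heisS; rw [dif_neg (by omega), dif_neg h2]

lemma heisS_lt_iff (k : Fin (2*m+1)) : ((heisS m k : Fin (2*m+1)) : ℕ) < 2*m ↔ (k : ℕ) < 2*m := by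
  by_cases h : (k : ℕ) < m
  · rw [heisS_apply_lt h]; show (k : ℕ) + m < 2*m ↔ _; omega
  · by_cases h2 : (k : ℕ) < 2*m
    · rw [heisS_apply_ge h h2]; show (k : ℕ) - m < 2*m ↔ _; omega
    · rw [heisS_apply_last h2]

lemma heisS_heisS (k : Fin (2*m+1)) : heisS m (heisS m k) = k := by
  by_cases h : (k : ℕ) < m
  · rw [heisS_apply_lt h, heisS_apply_ge (by show ¬ (k:ℕ)+m < m; omega) (by show (k:ℕ)+m < 2*m; omega)]
    apply Fin.ext; show (k:ℕ) + m - m = (k:ℕ); omega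
  · by_cases h2 : (k : ℕ) < 2*m
    · rw [heisS_apply_ge h h2, heisS_apply_lt (by show (k:ℕ)-m < m; omega)]
      apply Fin.ext; show (k:ℕ) - m + m = (k:ℕ); omega
    · rw [heisS_apply_last h2, heisS_apply_last h2]

lemma heisC_char2 [CharP F 2] (i j : Fin (2*m+1)) :
    heisC F m i j = if j = heisS m i ∧ (i : ℕ) < 2*m then 1 else 0 := by
  by_cases h1 : (j : ℕ) = (i : ℕ) + m ∧ (i : ℕ) < m
  · have hj : j = heisS m i := by
      apply Fin.ext; rw [heisS_apply_lt h1.2]; exact h1.1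
    rw [heisC, if_pos h1, if_pos ⟨hj, by omega⟩]
  · by_cases h2 : (i : ℕ) = (j : ℕ) + m ∧ (j : ℕ) < m
    · have hj : j = heisS m i := by
        apply Fin.ext
        rw [heisS_apply_ge (by omega) (by omega)]
        show (j : ℕ) = (i : ℕ) - m; omega
      rw [heisC, if_neg h1, if_pos h2, CharTwo.neg_eq, if_pos ⟨hj, by omega⟩]
    · rw [heisC, if_neg h1, if_neg h2, if_neg]
      rintro ⟨rfl, hlt⟩
      by_cases h : (i : ℕ) < m
      · rw [heisS_apply_lt h] at h1; exact h1 ⟨rfl, h⟩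
      · rw [heisS_apply_ge h hlt] at h2
        exact h2 ⟨by show (i:ℕ) = (i:ℕ) - m + m; omega, by show (i:ℕ) - m < m; omega⟩

lemma heisC_symm [CharP F 2] (i j : Fin (2*m+1)) : heisC F m i j = heisC F m j i := by
  unfold heisC
  have : (-1 : F) = 1 := CharTwo.neg_eq 1
  split_ifs <;> simp_all <;> omega

lemma heisC_last_left [CharP F 2] (j : Fin (2*m+1)) : heisC F m (Fin.last (2*m)) j = 0 := by
  rw [heisC_char2, if_neg]
  rintro ⟨-, hlt⟩
  simp at hlt

/-- collapse of a sum against structure constants (second index) -/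
lemma heis_sum_collapse [CharP F 2] (f : Fin (2*m+1) → F) (i : Fin (2*m+1)) :
    ∑ j, f j * heisC F m i j = if (i : ℕ) < 2*m then f (heisS m i) else 0 := by
  simp only [heisC_char2]
  by_cases h : (i : ℕ) < 2*m
  · simp only [h, and_true, if_pos]
    simp [mul_ite, Finset.sum_ite_eq']
  · simp [h]

/-- a symmetric, zero-diagonal double sum vanishes in characteristic two -/
lemma sum_quad_zero [CharP F 2] {N : ℕ} (f : Fin N → Fin N → F)
    (hsym : ∀ i j, f i j = f j i) (hdiag : ∀ i, f i i = 0) :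
    ∑ i, ∑ j, f i j = 0 := by
  rw [← Finset.sum_product']
  apply Finset.sum_ninvolution Prod.swap
  · intro a
    show f a.1 a.2 + f a.2 a.1 = 0
    rw [hsym a.1 a.2, CharTwo.add_self_eq_zero]
  · intro a hfa heq
    apply hfa
    have h12 : a.1 = a.2 := congrArg Prod.snd heq
    show f a.1 a.2 = 0
    rw [← h12, hdiag]
  · intro a; exact Finset.mem_univ _
  · intro a; exact Prod.swap_swap a


variable {F : Type*} [Field F] {m : ℕ}
variable {L : Type*} [LieRing L] [LieAlgebra F L] (b : Module.Basis (Fin (2*m+1)) F L)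
  (hb : ∀ i j : Fin (2*m+1), ⁅b i, b j⁆ =
      if (j : ℕ) = (i : ℕ) + m ∧ (i : ℕ) < m then b (Fin.last (2*m))
      else if (i : ℕ) = (j : ℕ) + m ∧ (j : ℕ) < m then - b (Fin.last (2*m))
      else 0)

lemma my_sum_lie {ι : Type*} (s : Finset ι) (f : ι → L) (y : L) :
    ⁅∑ i ∈ s, f i, y⁆ = ∑ i ∈ s, ⁅f i, y⁆ :=
  map_sum (AddMonoidHom.mk' (fun x => ⁅x, y⁆) (fun a c => add_lie a c y)) f s

lemma my_lie_sum {ι : Type*} (s : Finset ι) (f : ι → L) (y : L) :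
    ⁅y, ∑ i ∈ s, f i⁆ = ∑ i ∈ s, ⁅y, f i⁆ :=
  map_sum (AddMonoidHom.mk' (fun x => ⁅y, x⁆) (fun a c => lie_add y a c)) f s

lemma heis_repr_smul_last (t : F) :
    b.repr (t • b (Fin.last (2*m))) (Fin.last (2*m)) = t := by
  simp

include hb

lemma heis_lie_basis (i j : Fin (2*m+1)) :
    ⁅b i, b j⁆ = heisC F m i j • b (Fin.last (2*m)) := by
  rw [hb i j]; unfold heisC; split_ifs <;> simp

lemma heis_lie_expand (x y : L) :
    ⁅x, y⁆ = (∑ i, ∑ j, b.repr x i * b.repr y j * heisC F m i j) • b (Fin.last (2*m)) := by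
  conv_lhs => rw [← b.sum_repr x, ← b.sum_repr y]
  rw [my_sum_lie]
  simp only [smul_lie, my_lie_sum, lie_smul, heis_lie_basis b hb, smul_smul,
    Finset.sum_smul, mul_assoc]
  exact Finset.sum_congr rfl fun i _ => Finset.sum_congr rfl fun j _ => by rw [mul_left_comm]

lemma heis_lie_basis_left (i : Fin (2*m+1)) (x : L) :
    ⁅b i, x⁆ = (∑ j, b.repr x j * heisC F m i j) • b (Fin.last (2*m)) := by
  rw [heis_lie_expand b hb]
  congr 1
  rw [Finset.sum_eq_single i]
  · apply Finset.sum_congr rfl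
    intro j _
    simp [Module.Basis.repr_self_apply]
  · intro i' _ hne
    apply Finset.sum_eq_zero
    intro j _
    simp [Module.Basis.repr_self_apply, (Ne.symm hne : i ≠ i')]
  · intro h; exact absurd (Finset.mem_univ i) h

lemma heis_lie_in_z (x y : L) :
    ⁅x, y⁆ = (b.repr ⁅x, y⁆ (Fin.last (2*m))) • b (Fin.last (2*m)) := by
  rw [heis_lie_expand b hb x y, heis_repr_smul_last b]

lemma heis_kill (f : L →ₗ[F] L) (hf : f (b (Fin.last (2*m))) = 0) (x y : L) :
    f ⁅x, y⁆ = 0 := by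
  rw [heis_lie_in_z b hb x y, map_smul, hf, smul_zero]

variable [CharP F 2]

lemma heis_last_central (x : L) : ⁅b (Fin.last (2*m)), x⁆ = 0 := by
  have h0 : (∑ j, b.repr x j * heisC F m (Fin.last (2*m)) j) = 0 :=
    Finset.sum_eq_zero fun j _ => by rw [heisC_last_left, mul_zero]
  rw [heis_lie_basis_left b hb, h0, zero_smul]

lemma heis_central_smul (x : L) (t : F) : ⁅x, t • b (Fin.last (2*m))⁆ = 0 := by
  rw [lie_smul, ← lie_skew, heis_last_central b hb, neg_zero, smul_zero]

lemma heis_exists_der (B : Fin (2*m+1) → Fin (2*m+1) → F)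
    (hsym : ∀ i j, B i j = B j i) (hdiag : ∀ i, B i i = 0)
    (hlastrow : ∀ j, B (Fin.last (2*m)) j = 0) :
    ∃ ψ : LieDerivation F L L, ψ (b (Fin.last (2*m))) = 0 ∧ (∀ g : L, ⁅g, ψ g⁆ = 0) ∧
      ∀ i j, ⁅b i, ψ (b j)⁆ = B i j • b (Fin.last (2*m)) := by
  classical
  set f : L →ₗ[F] L := b.constr F (fun j => ∑ k, B (heisS m k) j • b k) with hfdef
  have hfb : ∀ j, f (b j) = ∑ k, B (heisS m k) j • b k := fun j => b.constr_basis F _ j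
  have hcol : ∀ i, B i (Fin.last (2*m)) = 0 := fun i => by rw [hsym]; exact hlastrow i
  have hfz : f (b (Fin.last (2*m))) = 0 := by
    rw [hfb]
    exact Finset.sum_eq_zero fun k _ => by rw [hcol, zero_smul]
  have hrepr : ∀ j k, b.repr (f (b j)) k = B (heisS m k) j := by
    intro j k
    rw [hfb]
    exact congrFun (b.repr_sum_self fun k => B (heisS m k) j) k
  have hbeta : ∀ i j, ⁅b i, f (b j)⁆ = B i j • b (Fin.last (2*m)) := by
    intro i j
    rw [heis_lie_basis_left b hb]
    congr 1
    calc ∑ k, b.repr (f (b j)) k * heisC F m i k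
        = ∑ k, B (heisS m k) j * heisC F m i k := by
          exact Finset.sum_congr rfl fun k _ => by rw [hrepr]
      _ = if (i : ℕ) < 2*m then B (heisS m (heisS m i)) j else 0 :=
          heis_sum_collapse _ i
      _ = B i j := by
          rw [heisS_heisS]
          split_ifs with h
          · rfl
          · have hi : i = Fin.last (2*m) := by
              apply Fin.ext; have := i.isLt; simp only [Fin.val_last]; omega
            rw [hi, hlastrow]
  have hquad : ∀ g : L, ⁅g, f g⁆ = 0 := by
    intro g
    conv_lhs => rw [← b.sum_repr g]
    rw [map_sum, my_sum_lie]
    simp only [map_smul, smul_lie, my_lie_sum, lie_smul, hbeta, smul_smul, Finset.smul_sum,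
      ← Finset.sum_smul]
    have h0 : (∑ i, ∑ j, b.repr g j * (b.repr g i * B i j)) = 0 :=
      sum_quad_zero _ (fun i j => by rw [hsym i j]; ring) (fun i => by rw [hdiag]; ring)
    rw [h0, zero_smul]
  have haddself : ∀ v : L, v + v = 0 := fun v => by
    rw [← two_smul F v, CharTwo.two_eq_zero, zero_smul]
  have hleib : ∀ x y : L, f ⁅x, y⁆ = ⁅x, f y⁆ - ⁅y, f x⁆ := by
    intro x y
    rw [heis_kill b hb f hfz]
    have h0 := hquad (x + y)
    rw [map_add, lie_add, add_lie, add_lie, hquad x, hquad y, zero_add, add_zero] at h0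
    have hb2 : ⁅y, f x⁆ = -⁅x, f y⁆ := eq_neg_iff_add_eq_zero.mpr h0
    rw [hb2, sub_neg_eq_add, haddself]
  exact ⟨⟨f, hleib⟩, hfz, hquad, hbeta⟩


omit hb [CharP F 2] in
lemma card_lt_pairs (N : ℕ) :
    Fintype.card {p : Fin N × Fin N // p.1 < p.2} * 2 = N * (N - 1) := by
  have e : {p : Fin N × Fin N // p.1 < p.2} ≃ (Σ j : Fin N, Fin (j : ℕ)) :=
    { toFun := fun p => ⟨p.1.2, ⟨(p.1.1 : ℕ), p.2⟩⟩
      invFun := fun q => ⟨(⟨(q.2 : ℕ), by have h1 := q.2.isLt; have h2 := q.1.isLt; omega⟩, q.1),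
        by simpa [Fin.lt_def] using q.2.isLt⟩
      left_inv := fun p => rfl
      right_inv := fun q => rfl }
  rw [Fintype.card_congr e, Fintype.card_sigma]
  simp only [Fintype.card_fin]
  rw [Fin.sum_univ_eq_sum_range (fun i => i) N]
  exact Finset.sum_range_id_mul_two N


end HeisAux




/-- **Statement 4.** Let `F` be an algebraically closed field of characteristic `2`, let
`m ≥ 1`, and let `λ ∈ F^{2m+1}` with `λ_{2m+1} ≠ 0`.  The restricted `[2]`-map on `h_m`
determined by `λ` is `g^{[2]} = (Σ_i a_i² λ_i + Σ_{j=1}^m a_j a_{m+j}) e_{2m+1}` for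
`g = Σ_i a_i e_i`.  Consider the subspace `D_λ` of derivations `ψ` of `h_m` satisfying
`[g, ψ(g)] = ψ(g^{[2]})` for all `g`; this subspace contains all inner derivations.  Then
`D_λ / Inn(h_m) = H¹_*(h_m^λ(2), h_m^λ(2))` has dimension `2m² − m` over `F`. -/
theorem heisenberg_restricted_H1_dim_char_two_lam_ne_zero
    (F : Type*) [Field F] [IsAlgClosed F] [CharP F 2]
    (m : ℕ) (hm : 1 ≤ m)
    (L : Type*) [LieRing L] [LieAlgebra F L]
    (b : Module.Basis (Fin (2*m+1)) F L)
    (hb : ∀ i j : Fin (2*m+1), ⁅b i, b j⁆ =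
      if (j : ℕ) = (i : ℕ) + m ∧ (i : ℕ) < m then b (Fin.last (2*m))
      else if (i : ℕ) = (j : ℕ) + m ∧ (j : ℕ) < m then - b (Fin.last (2*m))
      else 0)
    (lam : Fin (2*m+1) → F) (hlam : lam (Fin.last (2*m)) ≠ 0)
    (P : L → L)
    (hP : ∀ g : L, P g =
      (∑ i, (b.repr g i)^2 * lam i +
        ∑ j : Fin m, b.repr g ⟨(j : ℕ), by omega⟩ * b.repr g ⟨m + (j : ℕ), by omega⟩) •
      b (Fin.last (2*m)))
    (Dlam : Submodule F (LieDerivation F L L))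
    (hD : ∀ ψ : LieDerivation F L L, ψ ∈ Dlam ↔
      ∀ g : L, ⁅g, ψ g⁆ = ψ (P g))
    (Inn : Submodule F (LieDerivation F L L))
    (hInn : ∀ D : LieDerivation F L L, D ∈ Inn ↔ ∃ h : L, ∀ g : L, D g = ⁅h, g⁆) :
    Inn ≤ Dlam ∧
    Module.finrank F (↥Dlam ⧸ Submodule.comap Dlam.subtype Inn) = 2*m^2 - m := by
  classical
  -- ## Part 1 : inner derivations satisfy the restricted condition
  have hInnDlam : Inn ≤ Dlam := by
    intro D hmemInn
    obtain ⟨h, hh⟩ := (hInn D).mp hmemInn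
    rw [hD]
    intro g
    rw [hh g, hh (P g), heis_lie_in_z b hb h g, heis_central_smul b hb, hP g,
      heis_central_smul b hb]
  refine ⟨hInnDlam, ?_⟩
  -- ## Part 2 : preliminary facts
  have hPz : P (b (Fin.last (2*m))) = lam (Fin.last (2*m)) • b (Fin.last (2*m)) := by
    rw [hP]
    congr 1
    have h1 : (∑ i, (b.repr (b (Fin.last (2*m))) i)^2 * lam i) = lam (Fin.last (2*m)) := by
      rw [Finset.sum_eq_single (Fin.last (2*m))]
      · simp [Module.Basis.repr_self_apply]
      · intro i _ hne
        rw [Module.Basis.repr_self_apply, if_neg (fun hcon => hne hcon.symm)]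
        ring
      · intro hcon; exact absurd (Finset.mem_univ _) hcon
    have h2 : (∑ j : Fin m, b.repr (b (Fin.last (2*m))) ⟨(j : ℕ), by omega⟩ *
        b.repr (b (Fin.last (2*m))) ⟨m + (j : ℕ), by omega⟩) = 0 := by
      apply Finset.sum_eq_zero
      intro j _
      have : Fin.last (2*m) ≠ (⟨(j : ℕ), by omega⟩ : Fin (2*m+1)) := by
        intro hcon
        have := congrArg Fin.val hcon
        simp only [Fin.val_last] at this
        have := j.isLt
        omega
      rw [Module.Basis.repr_self_apply, if_neg this, zero_mul]
    rw [h1, h2, add_zero]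
  have hpz : ∀ ψ : LieDerivation F L L, ψ ∈ Dlam → ψ (b (Fin.last (2*m))) = 0 := by
    intro ψ hmem
    have h := (hD ψ).mp hmem (b (Fin.last (2*m)))
    rw [heis_last_central b hb, hPz, map_smul] at h
    exact ((smul_eq_zero.mp h.symm).resolve_left hlam)
  have hq0 : ∀ ψ : LieDerivation F L L, ψ ∈ Dlam → ∀ g : L, ⁅g, ψ g⁆ = 0 := by
    intro ψ hmem g
    rw [(hD ψ).mp hmem g, hP g, map_smul, hpz ψ hmem, smul_zero]
  -- ## Part 3 : the linear map Φ
  let Φ : ↥Dlam →ₗ[F] (Fin (2*m) → Fin (2*m) → F) :=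
    { toFun := fun ψ => fun i j =>
        b.repr ⁅b (Fin.castSucc i), (ψ : LieDerivation F L L) (b (Fin.castSucc j))⁆
          (Fin.last (2*m))
      map_add' := by
        intro ψ φ
        funext i j
        simp [lie_add]
      map_smul' := by
        intro c ψ
        funext i j
        simp [lie_smul] }
  have hΦapp : ∀ (ψ : ↥Dlam) (i j : Fin (2*m)),
      Φ ψ i j = b.repr ⁅b (Fin.castSucc i), (ψ : LieDerivation F L L) (b (Fin.castSucc j))⁆
        (Fin.last (2*m)) := fun _ _ _ => rfl
  have hΦz : ∀ (ψ : ↥Dlam) (i j : Fin (2*m)),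
      ⁅b (Fin.castSucc i), (ψ : LieDerivation F L L) (b (Fin.castSucc j))⁆ =
        Φ ψ i j • b (Fin.last (2*m)) := by
    intro ψ i j
    rw [hΦapp]
    exact heis_lie_in_z b hb _ _
  have hdiagΦ : ∀ (ψ : ↥Dlam) (i : Fin (2*m)), Φ ψ i i = 0 := by
    intro ψ i
    rw [hΦapp, hq0 ψ ψ.2 _, map_zero]
    rfl
  have hsymΦ : ∀ (ψ : ↥Dlam) (i j : Fin (2*m)), Φ ψ i j = Φ ψ j i := by
    intro ψ i j
    have h0 := hq0 ψ ψ.2 (b (Fin.castSucc i) + b (Fin.castSucc j))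
    rw [map_add, lie_add, add_lie, add_lie, hq0 ψ ψ.2 (b (Fin.castSucc i)),
      hq0 ψ ψ.2 (b (Fin.castSucc j)), zero_add, add_zero] at h0
    have h1 := congrArg (fun v => b.repr v (Fin.last (2*m))) h0
    simp only [map_add, Finsupp.add_apply, map_zero, Finsupp.zero_apply] at h1
    have h2 : Φ ψ i j = - Φ ψ j i := by
      rw [hΦapp, hΦapp]
      exact eq_neg_iff_add_eq_zero.mpr (by rw [add_comm]; exact h1)
    rw [h2, CharTwo.neg_eq]
  -- ## Part 4 : kernel of Φ = inner derivations
  have hker : LinearMap.ker Φ = Submodule.comap Dlam.subtype Inn := by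
    apply le_antisymm
    · intro ψ h0
      rw [LinearMap.mem_ker] at h0
      rw [Submodule.mem_comap]
      show (ψ : LieDerivation F L L) ∈ Inn
      rw [hInn]
      set t : Fin (2*m+1) → F :=
        fun j => b.repr ((ψ : LieDerivation F L L) (b j)) (Fin.last (2*m)) with ht
      have hz0 : (ψ : LieDerivation F L L) (b (Fin.last (2*m))) = 0 := hpz _ ψ.2
      have htlast : t (Fin.last (2*m)) = 0 := by rw [ht]; simp [hz0]
      -- each ψ (b j) is central
      have hcent : ∀ j, (ψ : LieDerivation F L L) (b j) = t j • b (Fin.last (2*m)) := by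
        intro j
        by_cases hj : (j : ℕ) < 2*m
        case neg =>
          have hjl : j = Fin.last (2*m) := by
            apply Fin.ext; have := j.isLt; simp only [Fin.val_last]; omega
          rw [hjl, hz0, htlast, zero_smul]
        case pos =>
        conv_lhs => rw [← b.sum_repr ((ψ : LieDerivation F L L) (b j))]
        rw [Finset.sum_eq_single (Fin.last (2*m)) ?hs1 ?hs2]
        case hs2 => intro hcon; exact absurd (Finset.mem_univ _) hcon
        case hs1 =>
          intro k _ hkne
          have hk : (k : ℕ) < 2*m := by
            have h1 := k.isLt
            have h2 : (k : ℕ) ≠ 2*m := fun hc => hkne (Fin.ext (by simp [hc]))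
            omega
          -- the bracket with b (heisS m k) detects the k-th coordinate
          have hilt : ((heisS m k : Fin (2*m+1)) : ℕ) < 2*m := (heisS_lt_iff k).mpr hk
          have hv := heis_lie_basis_left b hb (heisS m k)
            ((ψ : LieDerivation F L L) (b j))
          rw [heis_sum_collapse, if_pos hilt, heisS_heisS] at hv
          have hzero : ⁅b (heisS m k), (ψ : LieDerivation F L L) (b j)⁆ = 0 := by
            have hi' : Fin.castSucc (⟨((heisS m k : Fin (2*m+1)) : ℕ), hilt⟩ : Fin (2*m)) =
                heisS m k := Fin.ext (by simp)
            have hj' : Fin.castSucc (⟨(j : ℕ), hj⟩ : Fin (2*m)) = j := Fin.ext (by simp)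
            rw [← hi', ← hj', hΦz ψ, h0]
            simp
          rw [hzero] at hv
          have : b.repr ((ψ : LieDerivation F L L) (b j)) k = 0 := by
            rcases smul_eq_zero.mp hv.symm with h | h
            · exact h
            · exact absurd h (b.ne_zero _)
          rw [this, zero_smul]
      -- the inner element
      refine ⟨∑ i, t (heisS m i) • b i, ?_⟩
      have hadj : ∀ j, ⁅∑ i, t (heisS m i) • b i, b j⁆ = t j • b (Fin.last (2*m)) := by
        intro j
        rw [my_sum_lie]
        simp only [smul_lie, heis_lie_basis b hb, smul_smul]
        rw [← Finset.sum_smul]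
        congr 1
        have hs : (∑ i, t (heisS m i) * heisC F m i j) =
            ∑ i, t (heisS m i) * heisC F m j i :=
          Finset.sum_congr rfl fun i _ => by rw [heisC_symm]
        rw [hs, heis_sum_collapse (fun i => t (heisS m i)) j]
        by_cases hj : (j : ℕ) < 2*m
        · rw [if_pos hj, heisS_heisS]
        · rw [if_neg hj]
          have hjl : j = Fin.last (2*m) := by
            apply Fin.ext; have := j.isLt; simp only [Fin.val_last]; omega
          rw [hjl, htlast]
      let adh : L →ₗ[F] L :=
        { toFun := fun g => ⁅∑ i, t (heisS m i) • b i, g⁆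
          map_add' := fun x y => lie_add _ x y
          map_smul' := fun c x => lie_smul c _ x }
      have heq : ((ψ : LieDerivation F L L) : L →ₗ[F] L) = adh := by
        apply b.ext
        intro j
        show (ψ : LieDerivation F L L) (b j) = ⁅∑ i, t (heisS m i) • b i, b j⁆
        rw [hcent j, hadj j]
      intro g
      show (ψ : LieDerivation F L L) g = ⁅∑ i, t (heisS m i) • b i, g⁆
      exact LinearMap.congr_fun heq g
    · intro ψ hmem
      rw [Submodule.mem_comap] at hmem
      rw [LinearMap.mem_ker]
      obtain ⟨h, hh⟩ := (hInn _).mp hmem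
      have hh' : ∀ g : L, (ψ : LieDerivation F L L) g = ⁅h, g⁆ := hh
      funext i j
      show b.repr ⁅b (Fin.castSucc i), (ψ : LieDerivation F L L) (b (Fin.castSucc j))⁆
        (Fin.last (2*m)) = 0
      rw [hh', heis_lie_in_z b hb h (b (Fin.castSucc j)), heis_central_smul b hb]
      simp
  -- ## Part 5 : range of Φ = symmetric matrices with zero diagonal
  let Sym0 : Submodule F (Fin (2*m) → Fin (2*m) → F) :=
    { carrier := {B | (∀ i j, B i j = B j i) ∧ (∀ i, B i i = 0)}
      add_mem' := by
        rintro B C ⟨hB1, hB2⟩ ⟨hC1, hC2⟩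
        refine ⟨fun i j => ?_, fun i => ?_⟩
        · show B i j + C i j = B j i + C j i
          rw [hB1, hC1]
        · show B i i + C i i = 0
          rw [hB2, hC2, add_zero]
      zero_mem' := ⟨fun i j => rfl, fun i => rfl⟩
      smul_mem' := by
        rintro c B ⟨hB1, hB2⟩
        refine ⟨fun i j => ?_, fun i => ?_⟩
        · show c * B i j = c * B j i
          rw [hB1]
        · show c * B i i = 0
          rw [hB2, mul_zero] }
  have hrange : LinearMap.range Φ = Sym0 := by
    apply le_antisymm
    · rintro _ ⟨ψ, rfl⟩
      exact ⟨hsymΦ ψ, hdiagΦ ψ⟩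
    · rintro B ⟨hBsym, hBdiag⟩
      set B' : Fin (2*m+1) → Fin (2*m+1) → F := fun i j =>
        if h : (i : ℕ) < 2*m ∧ (j : ℕ) < 2*m then B ⟨(i : ℕ), h.1⟩ ⟨(j : ℕ), h.2⟩ else 0
        with hB'
      have hB'sym : ∀ i j, B' i j = B' j i := by
        intro i j
        rw [hB']
        beta_reduce
        by_cases h1 : (i : ℕ) < 2*m <;> by_cases h2 : (j : ℕ) < 2*m
        · rw [dif_pos ⟨h1, h2⟩, dif_pos ⟨h2, h1⟩, hBsym]
        · rw [dif_neg (by tauto), dif_neg (by tauto)]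
        · rw [dif_neg (by tauto), dif_neg (by tauto)]
        · rw [dif_neg (by tauto), dif_neg (by tauto)]
      have hB'diag : ∀ i, B' i i = 0 := by
        intro i
        rw [hB']
        beta_reduce
        by_cases h1 : (i : ℕ) < 2*m
        · rw [dif_pos ⟨h1, h1⟩]; exact hBdiag _
        · rw [dif_neg (by tauto)]
      have hB'last : ∀ j, B' (Fin.last (2*m)) j = 0 := by
        intro j
        rw [hB']
        beta_reduce
        rw [dif_neg (by simp)]
      obtain ⟨ψ, hψ1, hψ2, hψ3⟩ := heis_exists_der b hb B' hB'sym hB'diag hB'last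
      have hmemD : ψ ∈ Dlam := by
        rw [hD]
        intro g
        rw [hψ2 g, hP g, map_smul, hψ1, smul_zero]
      refine ⟨⟨ψ, hmemD⟩, ?_⟩
      funext i j
      show b.repr ⁅b (Fin.castSucc i), ψ (b (Fin.castSucc j))⁆ (Fin.last (2*m)) = B i j
      rw [hψ3, heis_repr_smul_last b, hB']
      beta_reduce
      rw [dif_pos ⟨by simp, by simp⟩]
      congr 1 <;> exact Fin.ext (by simp)
  -- ## Part 6 : dimension count
  have hquot : Module.finrank F (↥Dlam ⧸ Submodule.comap Dlam.subtype Inn) =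
      Module.finrank F ↥Sym0 := by
    rw [← hker, ← hrange]
    exact (LinearMap.quotKerEquivRange Φ).finrank_eq
  rw [hquot]
  -- the space of symmetric matrices with zero diagonal
  let S := {p : Fin (2*m) × Fin (2*m) // p.1 < p.2}
  let E : ↥Sym0 →ₗ[F] (S → F) :=
    { toFun := fun B p => (B : Fin (2*m) → Fin (2*m) → F) p.1.1 p.1.2
      map_add' := fun B C => rfl
      map_smul' := fun c B => rfl }
  have hEbij : Function.Bijective E := by
    constructor
    · intro B C hBC
      obtain ⟨hB1, hB2⟩ := B.2
      obtain ⟨hC1, hC2⟩ := C.2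
      apply Subtype.ext
      funext i j
      rcases lt_trichotomy i j with h | h | h
      · exact congrFun hBC ⟨(i, j), h⟩
      · rw [h, hB2, hC2]
      · rw [hB1, hC1]
        exact congrFun hBC ⟨(j, i), h⟩
    · intro f
      refine ⟨⟨fun i j => if h : i < j then f ⟨(i, j), h⟩ else
        if h' : j < i then f ⟨(j, i), h'⟩ else 0, ?_, ?_⟩, ?_⟩
      · intro i j
        beta_reduce
        rcases lt_trichotomy i j with h | h | h
        · rw [dif_pos h, dif_neg (not_lt_of_gt h), dif_pos h]
        · rw [h]
        · rw [dif_pos h, dif_neg (not_lt_of_gt h), dif_pos h]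
      · intro i
        beta_reduce
        rw [dif_neg (lt_irrefl i), dif_neg (lt_irrefl i)]
      · funext p
        show (if h : p.1.1 < p.1.2 then f ⟨(p.1.1, p.1.2), h⟩ else _) = f p
        rw [dif_pos p.2]
  have hrankS : Module.finrank F ↥Sym0 = Fintype.card S := by
    rw [(LinearEquiv.ofBijective E hEbij).finrank_eq]
    exact Module.finrank_pi F
  rw [hrankS]
  -- finally, count the pairs
  have hc := card_lt_pairs (2*m)
  have hm2 : m ≤ 2*m^2 := by
    calc m = m * 1 := (mul_one m).symm
    _ ≤ m * m := Nat.mul_le_mul_left m hm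
    _ ≤ 2 * m^2 := by rw [pow_two]; omega
  have hT : (2*m^2 - m) * 2 = 2*m * (2*m - 1) := by
    zify [hm2, show 1 ≤ 2*m by omega]
    ring
  exact Nat.eq_of_mul_eq_mul_right two_pos (hc.trans hT.symm)
end

section
/- For m = 1 and every field F, the second adjoint cohomology space H²(h_1, h_1), i.e. the quotient of the space of 2-cocycles by the space of 2-coboundaries, has dimension 5 over F. -/
set_option maxHeartbeats 2000000 in
theorem aux_heisenberg
    (F : Type*) [Field F]
    (L : Type*) [LieRing L] [LieAlgebra F L]
    (b : Module.Basis (Fin 3) F L)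
    (hb3 : ∀ i j : Fin 3, ⁅b i, b j⁆ =
      if j = 1 ∧ i = 0 then b 2 else if i = 1 ∧ j = 0 then - b 2 else 0)
    (Z B : Submodule F (L → L → L))
    (hZ : ∀ φ : L → L → L, φ ∈ Z ↔
      (∀ (a : F) (x x' y : L), φ (a • x + x') y = a • φ x y + φ x' y) ∧
      (∀ (a : F) (x y y' : L), φ x (a • y + y') = a • φ x y + φ x y') ∧
      (∀ x : L, φ x x = 0) ∧
      (∀ x y z : L, ⁅x, φ y z⁆ - ⁅y, φ x z⁆ + ⁅z, φ x y⁆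
        - φ ⁅x, y⁆ z + φ ⁅x, z⁆ y - φ ⁅y, z⁆ x = 0))
    (hB : ∀ φ : L → L → L, φ ∈ B ↔
      ∃ ψ : L →ₗ[F] L, ∀ x y : L, φ x y = ⁅x, ψ y⁆ - ⁅y, ψ x⁆ - ψ ⁅x, y⁆) :
    Module.finrank F (↥Z ⧸ Submodule.comap Z.subtype B) = 5 := by
  classical
  have h01 : ⁅b 0, b 1⁆ = b 2 := by simpa using hb3 0 1
  have h10 : ⁅b 1, b 0⁆ = - b 2 := by simpa using hb3 1 0
  have hzz : ∀ i j : Fin 3, ¬(j = 1 ∧ i = 0) → ¬(i = 1 ∧ j = 0) → ⁅b i, b j⁆ = 0 := by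
    intro i j hA hC; rw [hb3]; simp [hA, hC]
  have h02 : ⁅b 0, b 2⁆ = 0 := hzz 0 2 (by simp) (by simp)
  have h12 : ⁅b 1, b 2⁆ = 0 := hzz 1 2 (by simp) (by simp)
  have rb : ∀ i j : Fin 3, b.repr (b i) j = if i = j then 1 else 0 := by
    intro i j; rw [b.repr_self]; exact Finsupp.single_apply
  -- the general bracket formula
  have hlie : ∀ x y : L, ⁅x, y⁆ =
      (b.repr x 0 * b.repr y 1 - b.repr x 1 * b.repr y 0) • b 2 := by
    intro x y
    conv_lhs => rw [← b.sum_repr x, ← b.sum_repr y, Fin.sum_univ_three, Fin.sum_univ_three]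
    simp only [add_lie, lie_add, smul_lie, lie_smul]
    rw [h01, h10, hzz 0 0 (by simp) (by simp), hzz 0 2 (by simp) (by simp),
        hzz 1 1 (by simp) (by simp), hzz 1 2 (by simp) (by simp),
        hzz 2 0 (by simp) (by simp), hzz 2 1 (by simp) (by simp),
        hzz 2 2 (by simp) (by simp)]
    simp only [smul_zero, smul_neg, smul_smul, add_zero, zero_add]
    module
  have hrep : ∀ (u : Fin 3 → F) (k : Fin 3),
      b.repr (u 0 • b 0 + u 1 • b 1 + u 2 • b 2) k = u k := by
    intro u k
    have h3 : u 0 • b 0 + u 1 • b 1 + u 2 • b 2 = ∑ i, u i • b i := by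
      rw [Fin.sum_univ_three]
    rw [h3, b.repr_sum_self]
  -- injectivity of evaluation at the three basis pairs, for cocycles
  have hinj : ∀ φ ∈ Z, φ (b 0) (b 1) = 0 → φ (b 0) (b 2) = 0 → φ (b 1) (b 2) = 0 →
      φ = 0 := by
    intro φ hφ e01 e02 e12
    obtain ⟨hl, hr, halt, -⟩ := (hZ φ).mp hφ
    have hadd_l : ∀ x x' y : L, φ (x + x') y = φ x y + φ x' y := fun x x' y => by
      simpa using hl 1 x x' y
    have hadd_r : ∀ x y y' : L, φ x (y + y') = φ x y + φ x y' := fun x y y' => by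
      simpa using hr 1 x y y'
    have zl : ∀ y : L, φ 0 y = 0 := by
      intro y
      have h := hadd_l 0 0 y
      rw [add_zero] at h
      exact (left_eq_add.mp h)
    have zr : ∀ x : L, φ x 0 = 0 := by
      intro x
      have h := hadd_r x 0 0
      rw [add_zero] at h
      exact (left_eq_add.mp h)
    have hs_l : ∀ (a : F) (x y : L), φ (a • x) y = a • φ x y := by
      intro a x y
      have h := hl a x 0 y
      rw [add_zero, zl, add_zero] at h
      exact h
    have hs_r : ∀ (a : F) (x y : L), φ x (a • y) = a • φ x y := by
      intro a x y
      have h := hr a x y 0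
      rw [add_zero, zr, add_zero] at h
      exact h
    have hanti : ∀ x y : L, φ y x = - φ x y := by
      intro x y
      have h := halt (x + y)
      rw [hadd_l, hadd_r, hadd_r, halt x, halt y, zero_add, add_zero] at h
      exact eq_neg_of_add_eq_zero_right h
    have e10 : φ (b 1) (b 0) = 0 := by rw [hanti, e01, neg_zero]
    have e20 : φ (b 2) (b 0) = 0 := by rw [hanti, e02, neg_zero]
    have e21 : φ (b 2) (b 1) = 0 := by rw [hanti, e12, neg_zero]
    have key : ∀ i j : Fin 3, φ (b i) (b j) = 0 := by
      intro i j
      fin_cases i <;> fin_cases j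
      · exact halt _
      · exact e01
      · exact e02
      · exact e10
      · exact halt _
      · exact e12
      · exact e20
      · exact e21
      · exact halt _
    funext x y
    show φ x y = 0
    conv_lhs => rw [← b.sum_repr x, ← b.sum_repr y, Fin.sum_univ_three, Fin.sum_univ_three]
    simp [hadd_l, hadd_r, hs_l, hs_r, key]
  -- the linear constraint satisfied by cocycles
  have hker : ∀ φ ∈ Z,
      b.repr (φ (b 0) (b 2)) 0 + b.repr (φ (b 1) (b 2)) 1 = 0 := by
    intro φ hφ
    obtain ⟨hl, -, halt, hcoc⟩ := (hZ φ).mp hφ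
    have zl : ∀ y : L, φ 0 y = 0 := by
      intro y
      have h := hl 1 0 0 y
      rw [one_smul, add_zero, one_smul] at h
      exact (left_eq_add.mp h)
    have h := hcoc (b 0) (b 1) (b 2)
    rw [h01, h02, h12, zl, zl, halt] at h
    rw [hlie (b 0), hlie (b 1), hlie (b 2)] at h
    have h2 := congrArg (fun w => b.repr w 2) h
    simp only [map_add, map_sub, map_smul, map_zero, Finsupp.coe_add, Finsupp.coe_sub,
      Finsupp.coe_smul, Pi.add_apply, Pi.sub_apply, Pi.smul_apply, smul_eq_mul, rb,
      Finsupp.coe_zero, Pi.zero_apply] at h2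
    simp only [show ((0:Fin 3) = 0) = True from by decide,
      show ((0:Fin 3) = 1) = False from by decide, show ((0:Fin 3) = 2) = False from by decide,
      show ((1:Fin 3) = 0) = False from by decide, show ((1:Fin 3) = 1) = True from by decide,
      show ((1:Fin 3) = 2) = False from by decide, show ((2:Fin 3) = 0) = False from by decide,
      show ((2:Fin 3) = 1) = False from by decide, show ((2:Fin 3) = 2) = True from by decide,
      if_true, if_false] at h2
    linear_combination h2
  -- the functional cutting out the image of Z
  let ell : (Fin 3 → Fin 3 → F) →ₗ[F] F :=
    { toFun := fun v => v 1 0 + v 2 1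
      map_add' := by intro u w; simp [Pi.add_apply]; ring
      map_smul' := by intro a w; simp [Pi.smul_apply, smul_eq_mul]; ring }
  have ell_apply : ∀ v : Fin 3 → Fin 3 → F, ell v = v 1 0 + v 2 1 := fun _ => rfl
  -- the evaluation map on the three basis pairs
  let Φ : (L → L → L) →ₗ[F] (Fin 3 → Fin 3 → F) :=
    { toFun := fun φ => ![fun k => b.repr (φ (b 0) (b 1)) k,
        fun k => b.repr (φ (b 0) (b 2)) k, fun k => b.repr (φ (b 1) (b 2)) k]
      map_add' := by
        intro φ φ'
        funext p k
        fin_cases p <;>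
          simp [Pi.add_apply]
      map_smul' := by
        intro a φ
        funext p k
        fin_cases p <;>
          simp [Pi.smul_apply] }
  have Φ0 : ∀ φ : L → L → L, ∀ k, Φ φ 0 k = b.repr (φ (b 0) (b 1)) k := fun φ k => rfl
  have Φ1 : ∀ φ : L → L → L, ∀ k, Φ φ 1 k = b.repr (φ (b 0) (b 2)) k := fun φ k => rfl
  have Φ2 : ∀ φ : L → L → L, ∀ k, Φ φ 2 k = b.repr (φ (b 1) (b 2)) k := fun φ k => rfl
  -- the restriction of Φ to Z, landing in ker ell
  have hmem : ∀ φ : ↥Z, Φ (φ : L → L → L) ∈ LinearMap.ker ell := by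
    intro φ
    rw [LinearMap.mem_ker, ell_apply, Φ1, Φ2]
    exact hker φ.1 φ.2
  let f : ↥Z →ₗ[F] ↥(LinearMap.ker ell) :=
    LinearMap.codRestrict _ (Φ.comp Z.subtype) hmem
  have finj : Function.Injective f := by
    rw [← LinearMap.ker_eq_bot, LinearMap.ker_eq_bot']
    intro φ hφ0
    have hΦ : Φ (φ : L → L → L) = 0 := congrArg Subtype.val hφ0
    have z01 : (φ : L → L → L) (b 0) (b 1) = 0 := by
      rw [← b.repr.map_eq_zero_iff]
      ext k
      exact (Φ0 φ.1 k).symm.trans (by rw [hΦ]; rfl)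
    have z02 : (φ : L → L → L) (b 0) (b 2) = 0 := by
      rw [← b.repr.map_eq_zero_iff]
      ext k
      exact (Φ1 φ.1 k).symm.trans (by rw [hΦ]; rfl)
    have z12 : (φ : L → L → L) (b 1) (b 2) = 0 := by
      rw [← b.repr.map_eq_zero_iff]
      ext k
      exact (Φ2 φ.1 k).symm.trans (by rw [hΦ]; rfl)
    exact Subtype.ext (hinj φ.1 φ.2 z01 z02 z12)
  have fsurj : Function.Surjective f := by
    rintro ⟨v, hv⟩
    rw [LinearMap.mem_ker, ell_apply] at hv
    have hv' : v 2 1 = -v 1 0 := by linear_combination hv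
    set φv : L → L → L := fun x y =>
      (b.repr x 0 * b.repr y 1 - b.repr x 1 * b.repr y 0) •
        (v 0 0 • b 0 + v 0 1 • b 1 + v 0 2 • b 2) +
      (b.repr x 0 * b.repr y 2 - b.repr x 2 * b.repr y 0) •
        (v 1 0 • b 0 + v 1 1 • b 1 + v 1 2 • b 2) +
      (b.repr x 1 * b.repr y 2 - b.repr x 2 * b.repr y 1) •
        (v 2 0 • b 0 + v 2 1 • b 1 + v 2 2 • b 2) with hφv
    have hmemZ : φv ∈ Z := by
      rw [hZ]
      refine ⟨?_, ?_, ?_, ?_⟩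
      · intro a x x' y
        simp only [hφv, map_add, map_smul, Finsupp.coe_add, Finsupp.coe_smul, Pi.add_apply,
          Pi.smul_apply, smul_eq_mul]
        module
      · intro a x y y'
        simp only [hφv, map_add, map_smul, Finsupp.coe_add, Finsupp.coe_smul, Pi.add_apply,
          Pi.smul_apply, smul_eq_mul]
        module
      · intro x
        simp only [hφv]
        simp only [show ∀ p q : F, p * q - q * p = 0 from fun p q => by ring]
        simp
      · intro x y z
        simp only [hφv, hlie, map_add, map_smul, Finsupp.coe_add, Finsupp.coe_smul,
          Pi.add_apply, Pi.smul_apply, smul_eq_mul, rb]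
        simp only [show ((0:Fin 3) = 0) = True from by decide,
          show ((0:Fin 3) = 1) = False from by decide,
          show ((0:Fin 3) = 2) = False from by decide,
          show ((1:Fin 3) = 0) = False from by decide,
          show ((1:Fin 3) = 1) = True from by decide,
          show ((1:Fin 3) = 2) = False from by decide,
          show ((2:Fin 3) = 0) = False from by decide,
          show ((2:Fin 3) = 1) = False from by decide,
          show ((2:Fin 3) = 2) = True from by decide, if_true, if_false]
        simp only [hv']
        module
    refine ⟨⟨φv, hmemZ⟩, ?_⟩
    apply Subtype.ext
    show Φ φv = v
    have hv01 : φv (b 0) (b 1) = v 0 0 • b 0 + v 0 1 • b 1 + v 0 2 • b 2 := by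
      simp only [hφv, rb]
      simp only [show ((0:Fin 3) = 0) = True from by decide, show ((0:Fin 3) = 1) = False from by decide, show ((0:Fin 3) = 2) = False from by decide, show ((1:Fin 3) = 0) = False from by decide, show ((1:Fin 3) = 1) = True from by decide, show ((1:Fin 3) = 2) = False from by decide, show ((2:Fin 3) = 0) = False from by decide, show ((2:Fin 3) = 1) = False from by decide, show ((2:Fin 3) = 2) = True from by decide, if_true, if_false]
      module
    have hv02 : φv (b 0) (b 2) = v 1 0 • b 0 + v 1 1 • b 1 + v 1 2 • b 2 := by
      simp only [hφv, rb]
      simp only [show ((0:Fin 3) = 0) = True from by decide, show ((0:Fin 3) = 1) = False from by decide, show ((0:Fin 3) = 2) = False from by decide, show ((1:Fin 3) = 0) = False from by decide, show ((1:Fin 3) = 1) = True from by decide, show ((1:Fin 3) = 2) = False from by decide, show ((2:Fin 3) = 0) = False from by decide, show ((2:Fin 3) = 1) = False from by decide, show ((2:Fin 3) = 2) = True from by decide, if_true, if_false]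
      module
    have hv12 : φv (b 1) (b 2) = v 2 0 • b 0 + v 2 1 • b 1 + v 2 2 • b 2 := by
      simp only [hφv, rb]
      simp only [show ((0:Fin 3) = 0) = True from by decide, show ((0:Fin 3) = 1) = False from by decide, show ((0:Fin 3) = 2) = False from by decide, show ((1:Fin 3) = 0) = False from by decide, show ((1:Fin 3) = 1) = True from by decide, show ((1:Fin 3) = 2) = False from by decide, show ((2:Fin 3) = 0) = False from by decide, show ((2:Fin 3) = 1) = False from by decide, show ((2:Fin 3) = 2) = True from by decide, if_true, if_false]
      module
    have hp0 : ∀ k, Φ φv 0 k = v 0 k := by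
      intro k; rw [Φ0, hv01]; exact hrep (v 0) k
    have hp1 : ∀ k, Φ φv 1 k = v 1 k := by
      intro k; rw [Φ1, hv02]; exact hrep (v 1) k
    have hp2 : ∀ k, Φ φv 2 k = v 2 k := by
      intro k; rw [Φ2, hv12]; exact hrep (v 2) k
    funext p k
    fin_cases p
    · exact hp0 k
    · exact hp1 k
    · exact hp2 k
  -- finrank of Z
  have hdim9 : Module.finrank F (Fin 3 → Fin 3 → F) = 9 := by
    rw [Module.finrank_pi_fintype]
    simp [Module.finrank_pi]
  have ellsurj : Function.Surjective ell := by
    intro a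
    refine ⟨fun p k => if p = 1 ∧ k = 0 then a else 0, ?_⟩
    rw [ell_apply]
    norm_num
  have hdimW : Module.finrank F ↥(LinearMap.ker ell) = 8 := by
    have hrn := LinearMap.finrank_range_add_finrank_ker ell
    rw [LinearMap.range_eq_top.mpr ellsurj, finrank_top, hdim9, Module.finrank_self] at hrn
    omega
  let e1 : ↥Z ≃ₗ[F] ↥(LinearMap.ker ell) := LinearEquiv.ofBijective f ⟨finj, fsurj⟩
  have hfinZ : FiniteDimensional F ↥Z := Module.Finite.equiv e1.symm
  have hdimZ : Module.finrank F ↥Z = 8 := by rw [e1.finrank_eq, hdimW]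
  -- B is contained in Z
  have sk : ∀ u w : L, ⁅u, w⁆ = -⁅w, u⁆ := fun u w => (lie_skew u w).symm
  have hBZ : B ≤ Z := by
    intro φ hφ
    obtain ⟨ψ, hψ⟩ := (hB φ).mp hφ
    rw [hZ]
    refine ⟨?_, ?_, ?_, ?_⟩
    · intro a x x' y
      simp only [hψ, add_lie, lie_add, smul_lie, lie_smul, map_add, map_smul, smul_sub]
      abel
    · intro a x y y'
      simp only [hψ, add_lie, lie_add, smul_lie, lie_smul, map_add, map_smul, smul_sub]
      abel
    · intro x
      simp [hψ]
    · intro x y z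
      have hx : ψ ⁅x, ⁅y, z⁆⁆ = -ψ ⁅z, ⁅x, y⁆⁆ + ψ ⁅y, ⁅x, z⁆⁆ := by
        rw [leibniz_lie, sk ⁅x, y⁆ z, map_add, map_neg]
      simp only [hψ, lie_sub, sub_lie, lie_lie, map_sub]
      simp only [sk z y, sk z x, sk y x, lie_neg, neg_lie, map_neg]
      simp only [hx]
      abel
  -- the coboundary space B is 3-dimensional
  let β : ↥B →ₗ[F] (Fin 3 → F) :=
    { toFun := fun φ => fun k => b.repr ((φ : L → L → L) (b 0) (b 1)) k
      map_add' := by intro φ φ'; funext k; simp [Pi.add_apply]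
      map_smul' := by intro a φ; funext k; simp [Pi.smul_apply] }
  have βinj : Function.Injective β := by
    rw [← LinearMap.ker_eq_bot, LinearMap.ker_eq_bot']
    intro φ hφ0
    obtain ⟨ψ, hψ⟩ := (hB φ.1).mp φ.2
    have z01 : (φ : L → L → L) (b 0) (b 1) = 0 := by
      rw [← b.repr.map_eq_zero_iff]
      ext k
      exact congrFun hφ0 k
    have e := hψ (b 0) (b 1)
    rw [h01, hlie (b 0), hlie (b 1), z01] at e
    have r0 : b.repr (ψ (b 2)) 0 = 0 := by
      have e0 := congrArg (fun w => b.repr w 0) e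
      simp only [map_sub, map_smul, map_zero, Finsupp.coe_sub, Finsupp.coe_smul,
        Pi.sub_apply, Pi.smul_apply, smul_eq_mul, rb, Finsupp.coe_zero, Pi.zero_apply] at e0
      simp only [show ((2:Fin 3) = 0) = False from by decide,
        show ((0:Fin 3) = 0) = True from by decide,
        show ((0:Fin 3) = 1) = False from by decide,
        show ((1:Fin 3) = 0) = False from by decide,
        show ((1:Fin 3) = 1) = True from by decide, if_true, if_false] at e0
      linear_combination e0
    have r1 : b.repr (ψ (b 2)) 1 = 0 := by
      have e0 := congrArg (fun w => b.repr w 1) e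
      simp only [map_sub, map_smul, map_zero, Finsupp.coe_sub, Finsupp.coe_smul,
        Pi.sub_apply, Pi.smul_apply, smul_eq_mul, rb, Finsupp.coe_zero, Pi.zero_apply] at e0
      simp only [show ((2:Fin 3) = 1) = False from by decide,
        show ((0:Fin 3) = 0) = True from by decide,
        show ((0:Fin 3) = 1) = False from by decide,
        show ((1:Fin 3) = 0) = False from by decide,
        show ((1:Fin 3) = 1) = True from by decide, if_true, if_false] at e0
      linear_combination e0
    have z02 : (φ : L → L → L) (b 0) (b 2) = 0 := by
      have e2 := hψ (b 0) (b 2)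
      rw [h02, map_zero ψ, hlie (b 0), hlie (b 2)] at e2
      rw [e2]
      simp only [rb, r0, r1]
      simp only [show ((0:Fin 3) = 0) = True from by decide,
        show ((0:Fin 3) = 1) = False from by decide,
        show ((2:Fin 3) = 0) = False from by decide,
        show ((2:Fin 3) = 1) = False from by decide, if_true, if_false]
      simp
    have z12 : (φ : L → L → L) (b 1) (b 2) = 0 := by
      have e2 := hψ (b 1) (b 2)
      rw [h12, map_zero ψ, hlie (b 1), hlie (b 2)] at e2
      rw [e2]
      simp only [rb, r0, r1]
      simp only [show ((1:Fin 3) = 0) = False from by decide,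
        show ((1:Fin 3) = 1) = True from by decide,
        show ((2:Fin 3) = 0) = False from by decide,
        show ((2:Fin 3) = 1) = False from by decide, if_true, if_false]
      simp
    exact Subtype.ext (hinj φ.1 (hBZ φ.2) z01 z02 z12)
  have βsurj : Function.Surjective β := by
    intro w
    set ψ : L →ₗ[F] L :=
      b.constr F ![w 2 • b 0, 0, -(w 0 • b 0 + w 1 • b 1)] with hψdef
    have hψ0 : ψ (b 0) = w 2 • b 0 := b.constr_basis F _ 0
    have hψ1 : ψ (b 1) = 0 := b.constr_basis F _ 1
    have hψ2 : ψ (b 2) = -(w 0 • b 0 + w 1 • b 1) := b.constr_basis F _ 2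
    set φw : L → L → L := fun x y => ⁅x, ψ y⁆ - ⁅y, ψ x⁆ - ψ ⁅x, y⁆ with hφw
    have hmemB : φw ∈ B := (hB φw).mpr ⟨ψ, fun x y => rfl⟩
    refine ⟨⟨φw, hmemB⟩, ?_⟩
    funext k
    show b.repr (φw (b 0) (b 1)) k = w k
    have : φw (b 0) (b 1) = w 0 • b 0 + w 1 • b 1 + w 2 • b 2 := by
      rw [hφw]
      show ⁅b 0, ψ (b 1)⁆ - ⁅b 1, ψ (b 0)⁆ - ψ ⁅b 0, b 1⁆ = _
      rw [h01, hψ0, hψ1, hψ2, lie_zero, lie_smul, h10]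
      module
    rw [this]
    exact hrep w k
  let e2 : ↥B ≃ₗ[F] (Fin 3 → F) := LinearEquiv.ofBijective β ⟨βinj, βsurj⟩
  have hdimB : Module.finrank F ↥B = 3 := by
    rw [e2.finrank_eq, Module.finrank_pi]
    simp
  -- put everything together
  have ecomap := Submodule.comapSubtypeEquivOfLe hBZ
  have hdimB' : Module.finrank F ↥(Submodule.comap Z.subtype B) = 3 := by
    rw [ecomap.finrank_eq, hdimB]
  have hq := Submodule.finrank_quotient_add_finrank (Submodule.comap Z.subtype B)
  rw [hdimB', hdimZ] at hq
  omega

/-- For `m = 1` and every field `F`, the second adjoint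
cohomology space `H²(h_m, h_m)`, i.e. the quotient of the space of 2-cocycles (alternating
bilinear maps `φ : h_m × h_m → h_m` with
`⁅x,φ(y,z)⁆ − ⁅y,φ(x,z)⁆ + ⁅z,φ(x,y)⁆ − φ(⁅x,y⁆,z) + φ(⁅x,z⁆,y) − φ(⁅y,z⁆,x) = 0`)
by the space of 2-coboundaries (`φ = d¹ψ` where `d¹ψ(x,y) = ⁅x,ψ y⁆ − ⁅y,ψ x⁆ − ψ⁅x,y⁆`
for an `F`-linear `ψ`), has dimension `5` over `F`. -/
theorem heisenberg_H2_dim_m_eq_one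
    (F : Type*) [Field F] (m : ℕ) (hm : m = 1)
    (L : Type*) [LieRing L] [LieAlgebra F L]
    (b : Module.Basis (Fin (2*m+1)) F L)
    (hb : ∀ i j : Fin (2*m+1), ⁅b i, b j⁆ =
      if (j : ℕ) = (i : ℕ) + m ∧ (i : ℕ) < m then b (Fin.last (2*m))
      else if (i : ℕ) = (j : ℕ) + m ∧ (j : ℕ) < m then - b (Fin.last (2*m))
      else 0)
    (Z B : Submodule F (L → L → L))
    (hZ : ∀ φ : L → L → L, φ ∈ Z ↔
      (∀ (a : F) (x x' y : L), φ (a • x + x') y = a • φ x y + φ x' y) ∧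
      (∀ (a : F) (x y y' : L), φ x (a • y + y') = a • φ x y + φ x y') ∧
      (∀ x : L, φ x x = 0) ∧
      (∀ x y z : L, ⁅x, φ y z⁆ - ⁅y, φ x z⁆ + ⁅z, φ x y⁆
        - φ ⁅x, y⁆ z + φ ⁅x, z⁆ y - φ ⁅y, z⁆ x = 0))
    (hB : ∀ φ : L → L → L, φ ∈ B ↔
      ∃ ψ : L →ₗ[F] L, ∀ x y : L, φ x y = ⁅x, ψ y⁆ - ⁅y, ψ x⁆ - ψ ⁅x, y⁆) :
    Module.finrank F (↥Z ⧸ Submodule.comap Z.subtype B) = 5 := by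
  subst hm
  refine aux_heisenberg F L b ?_ Z B hZ hB
  intro i j
  have h := hb i j
  fin_cases i <;> fin_cases j <;> simpa using h
end
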